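/- Let r ∈ [0,π), k ≥ 0, and μ ∈ V_{2k+1}(r). There is a neighborhood U of μ in VRm(S¹;r) such that every ν ∈ U satisfies arcs_r(ν) ≥ 2k+1; equivalently, U is disjoint from W_{2k−1}(r). -/

import Mathlib

open MeasureTheory Metric Filter
open scoped unitInterval

noncomputable section

/-- The circle of circumference `2π`, modeled as `ℝ/2πℤ` with the quotient (geodesic) metric. -/
abbrev S1 : Type := AddCircle (2 * Real.pi)

instance : Fact (0 < 2 * Real.pi) := ⟨by positivity⟩

/-- The set of atoms of a probability measure. -/
def suppSet {X : Type*} [MeasurableSpace X] (μ : ProbabilityMeasure X) : Set X :=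
  {x | μ {x} ≠ 0}

/-- Finitely supported Borel probability measures, topologized as a subspace of the
space of Borel probability measures with the topology of weak convergence. -/
abbrev Pfin (X : Type*) [MeasurableSpace X] : Type _ :=
  {μ : ProbabilityMeasure X // ∃ S : Finset X, μ (↑S : Set X) = 1}

/-- The Vietoris–Rips metric thickening of the circle at scale `r`:
finitely supported probability measures whose support has diameter at most `r`. -/
def VRm (r : ℝ) : Set (Pfin S1) :=
  {μ | Metric.diam (suppSet μ.1) ≤ r}


/-- A closed arc of the circle: the image of a closed interval `[a,b]` (with
`a ≤ b < a + 2π`, so possibly a single point) under the projection `ℝ → ℝ/2πℤ`. -/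
def IsClosedArc (A : Set S1) : Prop :=
  ∃ a b : ℝ, a ≤ b ∧ b < a + 2 * Real.pi ∧ A = (fun t : ℝ => (t : S1)) '' Set.Icc a b

/-- A point `x` is excluded by `Θ` (at scale `r`) if its distance from some point
of `Θ` exceeds `r`. -/
def ExcludedBy (r : ℝ) (Θ : Set S1) (x : S1) : Prop :=
  ∃ θ ∈ Θ, r < dist θ x

/-- A `(Θ,r)`-arc: a closed arc, maximal among closed arcs that contain at least one
point of `Θ` and contain no point excluded by `Θ`. -/
def IsArc (r : ℝ) (Θ : Set S1) (A : Set S1) : Prop :=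
  IsClosedArc A ∧ (A ∩ Θ).Nonempty ∧ (∀ x ∈ A, ¬ ExcludedBy r Θ x) ∧
    ∀ B : Set S1, IsClosedArc B → (B ∩ Θ).Nonempty → (∀ x ∈ B, ¬ ExcludedBy r Θ x) →
      A ⊆ B → A = B

/-- `arcs_r(Θ)`: the number of `(Θ,r)`-arcs. -/
def arcsCount (r : ℝ) (Θ : Set S1) : ℕ :=
  Set.ncard {A : Set S1 | IsArc r Θ A}

/-- `arcs_r(μ)` for a finitely supported measure: the number of `(supp μ, r)`-arcs. -/
def arcsCountM (r : ℝ) (μ : Pfin S1) : ℕ :=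
  arcsCount r (suppSet μ.1)

/-- `V_{2k+1}(r)`: measures in the metric thickening with exactly `2k+1` arcs. -/
def V (r : ℝ) (k : ℕ) : Set (Pfin S1) :=
  {μ ∈ VRm r | arcsCountM r μ = 2 * k + 1}

/-- `W_{2k+1}(r)`: measures in the metric thickening with at most `2k+1` arcs. -/
def W (r : ℝ) (k : ℕ) : Set (Pfin S1) :=
  {μ ∈ VRm r | arcsCountM r μ ≤ 2 * k + 1}

/-! ### Auxiliary circle geometry -/

section CircleGeometry

open Set

local notation "π" => Real.pi

lemma S1.dist_coe_le (u v : ℝ) : dist (u : S1) (v : S1) ≤ |u - v| := by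
  rw [dist_eq_norm, ← QuotientAddGroup.mk_sub]
  simpa using QuotientAddGroup.norm_mk_le_norm (S := AddSubgroup.zmultiples (2 * π)) (m := u - v)

lemma S1.dist_coe_eq {u v : ℝ} (h : |u - v| ≤ π) : dist (u : S1) (v : S1) = |u - v| := by
  rw [dist_eq_norm, ← QuotientAddGroup.mk_sub]
  rw [AddCircle.norm_coe_eq_abs_iff (2 * π) (by positivity : (0:ℝ) < 2 * π).ne']
  rw [abs_of_pos (by positivity : (0:ℝ) < 2 * π)]
  linarith

lemma S1.coe_add_zsmul (u : ℝ) (n : ℤ) : ((u + n • (2 * π) : ℝ) : S1) = (u : S1) := by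
  have h0 : ((n • (2 * π) : ℝ) : S1) = 0 := by
    rw [AddCircle.coe_eq_zero_iff]; exact ⟨n, rfl⟩
  rw [QuotientAddGroup.mk_add]
  rw [show ((n • (2 * π) : ℝ) : S1) = 0 from h0, add_zero]

lemma S1.coe_inj {u v : ℝ} (h : |u - v| < 2 * π) (he : (u : S1) = (v : S1)) : u = v := by
  have hsub : ((u - v : ℝ) : S1) = 0 := by
    rw [QuotientAddGroup.mk_sub, he, sub_self]
  rw [AddCircle.coe_eq_zero_iff] at hsub
  obtain ⟨n, hn⟩ := hsub
  have h2π : (0:ℝ) < 2 * π := by positivity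
  have hmul : |(n : ℝ)| * (2 * π) < 1 * (2 * π) := by
    calc |(n : ℝ)| * (2 * π) = |n • (2 * π)| := by
          rw [zsmul_eq_mul, abs_mul, abs_of_pos h2π]
      _ = |u - v| := by rw [hn]
      _ < 2 * π := h
      _ = 1 * (2 * π) := (one_mul _).symm
  have hn1 : |(n : ℝ)| < 1 := lt_of_mul_lt_mul_right hmul h2π.le
  have hnz : n = 0 := by
    have h' : |n| < 1 := by exact_mod_cast (by push_cast at hn1 ⊢; exact hn1 : (|n| : ℝ) < 1)
    exact Int.abs_lt_one_iff.mp h'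
  have : u - v = 0 := by rw [← hn, hnz]; simp
  linarith [this]

lemma S1.exists_lift (c : ℝ) (z : S1) :
    ∃ t : ℝ, (t : S1) = z ∧ |t - c| = dist (c : S1) z ∧ |t - c| ≤ π := by
  obtain ⟨y, rfl⟩ := QuotientAddGroup.mk_surjective z
  set n : ℤ := round ((y - c) / (2 * π)) with hn
  have h2π : (0:ℝ) < 2 * π := by positivity
  have hcoe : ((y - n • (2 * π) : ℝ) : S1) = (y : S1) := by
    rw [show y - n • (2 * π) = y + (-n) • (2 * π) by simp [zsmul_eq_mul]; ring]
    exact S1.coe_add_zsmul y (-n)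
  have hb : |y - n • (2 * π) - c| ≤ π := by
    have h1 : y - n • (2 * π) - c = ((y - c) / (2 * π) - n) * (2 * π) := by
      field_simp; ring
    rw [h1, abs_mul, abs_of_pos h2π]
    have := abs_sub_round ((y - c) / (2 * π))
    calc |(y - c) / (2 * π) - ↑n| * (2 * π) ≤ (1/2) * (2 * π) := by
          apply mul_le_mul_of_nonneg_right _ h2π.le
          simpa [hn] using this
      _ = π := by ring
  refine ⟨y - n • (2 * π), hcoe, ?_, hb⟩
  rw [← hcoe, S1.dist_coe_eq (by rwa [abs_sub_comm]), abs_sub_comm]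

/-- Membership in the image of an interval within a window of radius `< π`. -/
lemma S1.mem_image_iff {ρ c a b u : ℝ} (hρ : ρ < π)
    (hab : Icc a b ⊆ Icc (c - ρ) (c + ρ)) (hu : u ∈ Icc (c - ρ) (c + ρ)) :
    (u : S1) ∈ (fun t : ℝ => (t : S1)) '' Icc a b ↔ u ∈ Icc a b := by
  constructor
  · rintro ⟨v, hv, hvu⟩
    have hvw := hab hv
    have : v = u := by
      apply S1.coe_inj _ hvu
      have h1 : |v - u| ≤ 2 * ρ := by
        rw [abs_sub_le_iff]
        constructor <;> [linarith [hvw.1, hvw.2, hu.1, hu.2]; linarith [hvw.1, hvw.2, hu.1, hu.2]]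
      linarith
    rwa [← this]
  · intro h; exact ⟨u, h, rfl⟩

/-- A closed arc avoiding the complement of a ball of radius `ρ < π` around `c`
lifts to an interval inside the window `[c-ρ, c+ρ]`. -/
lemma S1.closedArc_window {ρ c : ℝ} (hρ0 : 0 ≤ ρ) (hρπ : ρ < π) {A : Set S1}
    (hA : IsClosedArc A) (hsub : ∀ z ∈ A, dist (c : S1) z ≤ ρ) :
    ∃ a b : ℝ, a ≤ b ∧ Icc a b ⊆ Icc (c - ρ) (c + ρ) ∧
      A = (fun t : ℝ => (t : S1)) '' Icc a b := by
  obtain ⟨a', b', hab', hb2π, rfl⟩ := hA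
  have ha'A : ((a' : ℝ) : S1) ∈ (fun t : ℝ => (t : S1)) '' Icc a' b' :=
    ⟨a', ⟨le_refl _, hab'⟩, rfl⟩
  obtain ⟨t, htc, htd, htπ⟩ := S1.exists_lift c ((a' : ℝ) : S1)
  have htρ : |t - c| ≤ ρ := by rw [htd]; exact hsub _ ha'A
  -- t and a' project to the same point, so t = a' + m•2π
  have hmem : ((t - a' : ℝ) : S1) = 0 := by rw [QuotientAddGroup.mk_sub, htc, sub_self]
  rw [AddCircle.coe_eq_zero_iff] at hmem
  obtain ⟨m, hm⟩ := hmem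
  set a : ℝ := t
  set b : ℝ := b' + (t - a')
  have himg : (fun t : ℝ => (t : S1)) '' Icc a b = (fun t : ℝ => (t : S1)) '' Icc a' b' := by
    have h1 : Icc a b = (fun x => x + (t - a')) '' Icc a' b' := by
      rw [image_add_const_Icc]
      simp only [a, b]
      congr 1; ring
    rw [h1, ← Set.image_comp]
    apply Set.image_congr
    intro x _
    simp only [Function.comp]
    rw [show x + (t - a') = x + m • (2 * π) by rw [hm], S1.coe_add_zsmul]
  have hab : a ≤ b := by simp only [a, b]; linarith
  have haw : a ∈ Icc (c - ρ) (c + ρ) := by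
    constructor <;> [linarith [abs_le.mp htρ |>.1]; linarith [abs_le.mp htρ |>.2]]
  have hbw : b ≤ c + ρ := by
    by_contra hb
    push_neg at hb
    set w : ℝ := min b (c + π) with hw
    have hww : w ∈ Icc a b := by
      constructor
      · apply le_min (by linarith [haw.2, hρπ]) (by linarith [haw.2, hρπ])
      · exact min_le_left _ _
    have hwA : ((w : ℝ) : S1) ∈ (fun t : ℝ => (t : S1)) '' Icc a' b' := by
      rw [← himg]; exact ⟨w, hww, rfl⟩
    have hd := hsub _ hwA
    have hwc : |w - c| ≤ π := by
      rw [abs_le]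
      constructor
      · have := Real.pi_pos; linarith [haw.1, hww.1, hρ0]
      · have := min_le_right b (c + π); linarith
    rw [S1.dist_coe_eq (by rwa [abs_sub_comm]), abs_sub_comm, abs_of_nonneg] at hd
    · have h1 : c + ρ < w := lt_min hb (by linarith)
      linarith
    · have h1 : c + ρ < w := lt_min hb (by linarith)
      linarith [hρ0]
  exact ⟨a, b, hab, fun x hx => ⟨by linarith [haw.1, hx.1], by linarith [hx.2]⟩, himg.symm⟩

/-! ### The non-excluded set and maximal arcs, in lifted coordinates -/

/-- Lifted non-excluded window: parameters `u ∈ [c-r, c+r]` whose projection is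
within distance `r` of every point of `Θ`. -/
def okSet (r : ℝ) (Θ : Set S1) (c : ℝ) : Set ℝ :=
  {u | u ∈ Icc (c - r) (c + r) ∧ ∀ θ ∈ Θ, dist θ ((u : ℝ) : S1) ≤ r}

lemma okSet_closed (r : ℝ) (Θ : Set S1) (c : ℝ) : IsClosed (okSet r Θ c) := by
  have h1 : okSet r Θ c =
      Icc (c - r) (c + r) ∩ ⋂ θ ∈ Θ, {u : ℝ | dist θ ((u : ℝ) : S1) ≤ r} := by
    ext u; simp [okSet, Set.mem_iInter]
  rw [h1]
  refine isClosed_Icc.inter (isClosed_biInter fun θ _ => ?_)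
  have hcont : Continuous fun u : ℝ => dist θ ((u : ℝ) : S1) :=
    Continuous.dist continuous_const (AddCircle.continuous_mk' _)
  exact isClosed_le hcont continuous_const

def leftEnd (r : ℝ) (Θ : Set S1) (c : ℝ) (t : ℝ) : ℝ :=
  sInf {u | u ∈ Icc (c - r) t ∧ Icc u t ⊆ okSet r Θ c}

def rightEnd (r : ℝ) (Θ : Set S1) (c : ℝ) (t : ℝ) : ℝ :=
  sSup {v | v ∈ Icc t (c + r) ∧ Icc t v ⊆ okSet r Θ c}

/-- The arc determined by a non-excluded parameter `t`. -/
def arcOf (r : ℝ) (Θ : Set S1) (c : ℝ) (t : ℝ) : Set S1 :=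
  (fun s : ℝ => (s : S1)) '' Icc (leftEnd r Θ c t) (rightEnd r Θ c t)

section Machinery

variable {r : ℝ} {Θ : Set S1} {c t : ℝ}

lemma leftEnd_spec (ht : t ∈ okSet r Θ c) :
    leftEnd r Θ c t ∈ Icc (c - r) t ∧ Icc (leftEnd r Θ c t) t ⊆ okSet r Θ c := by
  set S : Set ℝ := {u | u ∈ Icc (c - r) t ∧ Icc u t ⊆ okSet r Θ c} with hS
  have htS : t ∈ S := ⟨⟨ht.1.1, le_refl t⟩, by rw [Set.Icc_self]; simpa using ht⟩
  have hne : S.Nonempty := ⟨t, htS⟩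
  have hbdd : BddBelow S := ⟨c - r, fun u hu => hu.1.1⟩
  have hSsub : S ⊆ okSet r Θ c := fun u hu => hu.2 ⟨le_refl u, hu.1.2⟩
  have hg1 : c - r ≤ leftEnd r Θ c t := le_csInf hne fun u hu => hu.1.1
  have hg2 : leftEnd r Θ c t ≤ t := csInf_le hbdd htS
  refine ⟨⟨hg1, hg2⟩, fun v hv => ?_⟩
  rcases eq_or_lt_of_le hv.1 with heq | hlt
  · have : leftEnd r Θ c t ∈ closure S := csInf_mem_closure hne hbdd
    have : leftEnd r Θ c t ∈ okSet r Θ c :=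
      (okSet_closed r Θ c).closure_subset_iff.mpr hSsub this
    rwa [← heq]
  · obtain ⟨u, huS, hu⟩ := exists_lt_of_csInf_lt hne hlt
    exact huS.2 ⟨hu.le, hv.2⟩

lemma leftEnd_min (hu : Icc u t ⊆ okSet r Θ c) (hu2 : u ∈ Icc (c - r) t) :
    leftEnd r Θ c t ≤ u :=
  csInf_le ⟨c - r, fun v hv => hv.1.1⟩ ⟨hu2, hu⟩

lemma rightEnd_spec (ht : t ∈ okSet r Θ c) :
    rightEnd r Θ c t ∈ Icc t (c + r) ∧ Icc t (rightEnd r Θ c t) ⊆ okSet r Θ c := by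
  set S : Set ℝ := {v | v ∈ Icc t (c + r) ∧ Icc t v ⊆ okSet r Θ c} with hS
  have htS : t ∈ S := ⟨⟨le_refl t, ht.1.2⟩, by rw [Set.Icc_self]; simpa using ht⟩
  have hne : S.Nonempty := ⟨t, htS⟩
  have hbdd : BddAbove S := ⟨c + r, fun u hu => hu.1.2⟩
  have hSsub : S ⊆ okSet r Θ c := fun u hu => hu.2 ⟨hu.1.1, le_refl u⟩
  have hg1 : rightEnd r Θ c t ≤ c + r := csSup_le hne fun u hu => hu.1.2
  have hg2 : t ≤ rightEnd r Θ c t := le_csSup hbdd htS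
  refine ⟨⟨hg2, hg1⟩, fun v hv => ?_⟩
  rcases eq_or_lt_of_le hv.2 with heq | hlt
  · have : rightEnd r Θ c t ∈ closure S := csSup_mem_closure hne hbdd
    have : rightEnd r Θ c t ∈ okSet r Θ c :=
      (okSet_closed r Θ c).closure_subset_iff.mpr hSsub this
    rwa [heq]
  · obtain ⟨u, huS, hu⟩ := exists_lt_of_lt_csSup hne hlt
    exact huS.2 ⟨hv.1, hu.le⟩

lemma rightEnd_max (hu : Icc t u ⊆ okSet r Θ c) (hu2 : u ∈ Icc t (c + r)) :
    u ≤ rightEnd r Θ c t :=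
  le_csSup ⟨c + r, fun v hv => hv.1.2⟩ ⟨hu2, hu⟩

lemma arcOf_interval_sub (ht : t ∈ okSet r Θ c) :
    Icc (leftEnd r Θ c t) (rightEnd r Θ c t) ⊆ okSet r Θ c := by
  obtain ⟨hl, hlsub⟩ := leftEnd_spec ht
  obtain ⟨hr, hrsub⟩ := rightEnd_spec ht
  rw [← Set.Icc_union_Icc_eq_Icc hl.2 hr.1]
  exact Set.union_subset hlsub hrsub

lemma arcOf_interval_window (ht : t ∈ okSet r Θ c) :
    Icc (leftEnd r Θ c t) (rightEnd r Θ c t) ⊆ Icc (c - r) (c + r) :=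
  fun u hu => (arcOf_interval_sub ht hu).1

end Machinery

section ArcLemmas

variable {r : ℝ} {Θ : Set S1} {c : ℝ}

/-- Any closed arc through `(t : S1)` consisting of non-excluded points is contained
in `arcOf r Θ c t`. -/
lemma closedArc_subset_arcOf (hr0 : 0 ≤ r) (hrπ : r < π)
    (hc : ((c : ℝ) : S1) ∈ Θ) {t : ℝ} (ht : t ∈ okSet r Θ c) {B : Set S1}
    (hB : IsClosedArc B) (hBn : ∀ x ∈ B, ¬ ExcludedBy r Θ x) (htB : ((t : ℝ) : S1) ∈ B) :
    B ⊆ arcOf r Θ c t := by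
  have hball : ∀ z ∈ B, dist ((c : ℝ) : S1) z ≤ r := by
    intro z hz
    by_contra hlt
    exact hBn z hz ⟨_, hc, not_le.mp hlt⟩
  obtain ⟨a, b, hab, hW, rfl⟩ := S1.closedArc_window hr0 hrπ hB hball
  have hok : Icc a b ⊆ okSet r Θ c := by
    intro u hu
    refine ⟨hW hu, fun θ hθ => ?_⟩
    by_contra hlt
    exact hBn _ ⟨u, hu, rfl⟩ ⟨θ, hθ, not_le.mp hlt⟩
  have htab : t ∈ Icc a b := (S1.mem_image_iff hrπ hW ht.1).mp htB
  have h1 : leftEnd r Θ c t ≤ a :=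
    leftEnd_min (fun u hu => hok ⟨hu.1, hu.2.trans htab.2⟩) ⟨(hW ⟨le_refl a, hab⟩).1, htab.1⟩
  have h2 : b ≤ rightEnd r Θ c t :=
    rightEnd_max (fun u hu => hok ⟨htab.1.trans hu.1, hu.2⟩) ⟨htab.2, (hW ⟨hab, le_refl b⟩).2⟩
  exact Set.image_mono (Set.Icc_subset_Icc h1 h2)

lemma isClosedArc_arcOf (hr0 : 0 ≤ r) (hrπ : r < π) {t : ℝ} (ht : t ∈ okSet r Θ c) :
    IsClosedArc (arcOf r Θ c t) := by
  obtain ⟨hl, _⟩ := leftEnd_spec ht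
  obtain ⟨hr, _⟩ := rightEnd_spec ht
  refine ⟨leftEnd r Θ c t, rightEnd r Θ c t, hl.2.trans hr.1, ?_, rfl⟩
  have h1 : c - r ≤ leftEnd r Θ c t := hl.1
  have h2 : rightEnd r Θ c t ≤ c + r := hr.2
  have := Real.pi_pos
  linarith

lemma arcOf_not_excluded (ht : t ∈ okSet r Θ c) :
    ∀ x ∈ arcOf r Θ c t, ¬ ExcludedBy r Θ x := by
  rintro x ⟨u, hu, rfl⟩ ⟨θ, hθ, hlt⟩
  exact absurd ((arcOf_interval_sub ht hu).2 θ hθ) (not_le.mpr hlt)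

lemma mem_arcOf_self (ht : t ∈ okSet r Θ c) : ((t : ℝ) : S1) ∈ arcOf r Θ c t :=
  ⟨t, ⟨(leftEnd_spec ht).1.2, (rightEnd_spec ht).1.1⟩, rfl⟩

/-- `arcOf` of a `Θ`-parameter is an arc. -/
lemma isArc_arcOf (hr0 : 0 ≤ r) (hrπ : r < π) (hc : ((c : ℝ) : S1) ∈ Θ)
    {t : ℝ} (ht : t ∈ okSet r Θ c) (htΘ : ((t : ℝ) : S1) ∈ Θ) :
    IsArc r Θ (arcOf r Θ c t) := by
  refine ⟨isClosedArc_arcOf hr0 hrπ ht, ⟨((t : ℝ) : S1), mem_arcOf_self ht, htΘ⟩,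
    arcOf_not_excluded ht, ?_⟩
  intro B hB hBΘ hBn hsub
  exact le_antisymm hsub
    (closedArc_subset_arcOf hr0 hrπ hc ht hB hBn (hsub (mem_arcOf_self ht)))

/-- Any arc through `(t : S1)` equals `arcOf r Θ c t`. -/
lemma arc_eq_arcOf (hr0 : 0 ≤ r) (hrπ : r < π) (hc : ((c : ℝ) : S1) ∈ Θ)
    {t : ℝ} (ht : t ∈ okSet r Θ c) {A : Set S1} (hA : IsArc r Θ A)
    (htA : ((t : ℝ) : S1) ∈ A) : A = arcOf r Θ c t := by
  obtain ⟨hA1, ⟨θ₀, hθ₀A, hθ₀Θ⟩, hA3, hA4⟩ := hA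
  have hsub : A ⊆ arcOf r Θ c t := closedArc_subset_arcOf hr0 hrπ hc ht hA1 hA3 htA
  exact hA4 _ (isClosedArc_arcOf hr0 hrπ ht) ⟨θ₀, hsub hθ₀A, hθ₀Θ⟩
    (arcOf_not_excluded ht) hsub

lemma arcOf_congr {t t' : ℝ} (ht : t ∈ okSet r Θ c) (ht' : t' ∈ okSet r Θ c)
    (hle : t ≤ t') (hIcc : Icc t t' ⊆ okSet r Θ c) :
    arcOf r Θ c t = arcOf r Θ c t' := by
  obtain ⟨hlt, hltsub⟩ := leftEnd_spec ht
  obtain ⟨hrt, hrtsub⟩ := rightEnd_spec ht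
  obtain ⟨hlt', hltsub'⟩ := leftEnd_spec ht'
  obtain ⟨hrt', hrtsub'⟩ := rightEnd_spec ht'
  have hlt'le : leftEnd r Θ c t' ≤ t := leftEnd_min hIcc ⟨ht.1.1, hle⟩
  have hrtge : t' ≤ rightEnd r Θ c t := rightEnd_max hIcc ⟨hle, ht'.1.2⟩
  have hl : leftEnd r Θ c t = leftEnd r Θ c t' := by
    apply le_antisymm
    · exact leftEnd_min (fun u hu => hltsub' ⟨hu.1, hu.2.trans hle⟩) ⟨hlt'.1, hlt'le⟩
    · refine leftEnd_min ?_ ⟨hlt.1, hlt.2.trans hle⟩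
      rw [← Set.Icc_union_Icc_eq_Icc hlt.2 hle]
      exact Set.union_subset hltsub hIcc
  have hr : rightEnd r Θ c t = rightEnd r Θ c t' := by
    apply le_antisymm
    · exact rightEnd_max (fun u hu => arcOf_interval_sub ht
        ⟨(hlt.2.trans hle).trans hu.1, hu.2⟩) ⟨hrtge, hrt.2⟩
    · refine rightEnd_max ?_ ⟨hle.trans hrt'.1, hrt'.2⟩
      rw [← Set.Icc_union_Icc_eq_Icc hle hrt'.1]
      exact Set.union_subset hIcc hrtsub'
  rw [arcOf, arcOf, hl, hr]

end ArcLemmas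

section GapAndCount

variable {r : ℝ} {Θ : Set S1} {c : ℝ}

/-- If two non-excluded parameters generate different arcs, there is an excluded
point strictly between them. -/
lemma gap_exists {t t' : ℝ} (ht : t ∈ okSet r Θ c) (ht' : t' ∈ okSet r Θ c)
    (hle : t ≤ t') (hne : arcOf r Θ c t ≠ arcOf r Θ c t') :
    ∃ u : ℝ, (t < u ∧ u < t') ∧ ∃ θ ∈ Θ, r < dist θ ((u : ℝ) : S1) := by
  by_contra hcon
  push_neg at hcon
  apply hne
  apply arcOf_congr ht ht' hle
  intro v hv
  rcases eq_or_lt_of_le hv.1 with h1 | h1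
  · rwa [← h1]
  rcases eq_or_lt_of_le hv.2 with h2 | h2
  · rwa [h2]
  exact ⟨⟨ht.1.1.trans hv.1, hv.2.trans ht'.1.2⟩, hcon v ⟨h1, h2⟩⟩

/-- Lifted parameter set of `Θ`. -/
def liftSet (r : ℝ) (Θ : Set S1) (c : ℝ) : Set ℝ :=
  {t | t ∈ Icc (c - r) (c + r) ∧ ((t : ℝ) : S1) ∈ Θ}

lemma liftSet_sub_okSet (hd : ∀ x ∈ Θ, ∀ y ∈ Θ, dist x y ≤ r) :
    liftSet r Θ c ⊆ okSet r Θ c :=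
  fun t ht => ⟨ht.1, fun θ hθ => hd θ hθ _ ht.2⟩

lemma liftSet_finite (hr0 : 0 ≤ r) (hrπ : r < π) (hΘ : Θ.Finite) :
    (liftSet r Θ c).Finite := by
  apply Set.Finite.of_finite_image (f := fun t : ℝ => (t : S1))
  · exact hΘ.subset (by rintro _ ⟨t, ht, rfl⟩; exact ht.2)
  · intro u hu v hv he
    apply S1.coe_inj _ he
    have h1 : |u - v| ≤ 2 * r := by
      rw [abs_sub_le_iff]
      exact ⟨by linarith [hu.1.1, hu.1.2, hv.1.1, hv.1.2],
        by linarith [hu.1.1, hu.1.2, hv.1.1, hv.1.2]⟩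
    linarith

/-- Every arc of `Θ` is `arcOf` of some lifted parameter of `Θ`. -/
lemma arcs_sub_image (hr0 : 0 ≤ r) (hrπ : r < π) (hc : ((c : ℝ) : S1) ∈ Θ)
    (hd : ∀ x ∈ Θ, ∀ y ∈ Θ, dist x y ≤ r) :
    {A : Set S1 | IsArc r Θ A} ⊆ arcOf r Θ c '' liftSet r Θ c := by
  intro A hA
  obtain ⟨θ₀, hθ₀A, hθ₀Θ⟩ := hA.2.1
  obtain ⟨t, htc, htd, _⟩ := S1.exists_lift c θ₀
  have htw : t ∈ Icc (c - r) (c + r) := by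
    have : |t - c| ≤ r := by rw [htd]; exact hd _ hc _ hθ₀Θ
    exact ⟨by linarith [abs_le.mp this |>.1], by linarith [abs_le.mp this |>.2]⟩
  have htl : t ∈ liftSet r Θ c := ⟨htw, htc ▸ hθ₀Θ⟩
  exact ⟨t, htl, (arc_eq_arcOf hr0 hrπ hc (liftSet_sub_okSet hd htl) hA (htc ▸ hθ₀A)).symm⟩

lemma arcs_finite (hr0 : 0 ≤ r) (hrπ : r < π) (hc : ((c : ℝ) : S1) ∈ Θ)
    (hd : ∀ x ∈ Θ, ∀ y ∈ Θ, dist x y ≤ r) (hΘ : Θ.Finite) :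
    {A : Set S1 | IsArc r Θ A}.Finite :=
  ((liftSet_finite hr0 hrπ hΘ).image _).subset (arcs_sub_image hr0 hrπ hc hd)

end GapAndCount

end CircleGeometry

/-! ### Measure-theoretic lemmas -/

section MeasureLemmas

open Set

lemma exists_atom_of_ne_zero (ν : Pfin S1) {G : Set S1} (hG : MeasurableSet G)
    (h : ν.1 G ≠ 0) : ∃ x ∈ suppSet ν.1, x ∈ G := by
  obtain ⟨S, hS⟩ := ν.2
  by_contra hcon
  push_neg at hcon
  apply h
  have hSm : MeasurableSet (↑S : Set S1) := (S.finite_toSet).measurableSet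
  have hS1 : ν.1.toMeasure (↑S : Set S1) = 1 := by
    rw [← MeasureTheory.ProbabilityMeasure.ennreal_coeFn_eq_coeFn_toMeasure, hS]
    simp
  have hScompl : ν.1.toMeasure (↑S : Set S1)ᶜ = 0 := by
    rw [MeasureTheory.measure_compl hSm (by simp [hS1]), hS1]
    simp [MeasureTheory.measure_univ]
  have hsub : G ⊆ (⋃ x ∈ S, ({x} ∩ G)) ∪ (↑S : Set S1)ᶜ := by
    intro x hx
    by_cases hxS : x ∈ S
    · exact Or.inl (Set.mem_biUnion hxS ⟨rfl, hx⟩)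
    · exact Or.inr hxS
  have hzero : ν.1.toMeasure G = 0 := by
    refine le_antisymm ?_ (zero_le)
    calc ν.1.toMeasure G ≤ ν.1.toMeasure ((⋃ x ∈ S, ({x} ∩ G)) ∪ (↑S : Set S1)ᶜ) :=
          MeasureTheory.measure_mono hsub
      _ ≤ ν.1.toMeasure (⋃ x ∈ S, ({x} ∩ G)) + ν.1.toMeasure (↑S : Set S1)ᶜ :=
          MeasureTheory.measure_union_le _ _
      _ ≤ (∑ x ∈ S, ν.1.toMeasure ({x} ∩ G)) + 0 := by
          rw [hScompl]
          exact add_le_add_left (MeasureTheory.measure_biUnion_finset_le S _) 0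
      _ = 0 := by
          rw [add_zero]
          apply Finset.sum_eq_zero
          intro x hxS
          by_cases hxsupp : x ∈ suppSet ν.1
          · have : {x} ∩ G = ∅ := by
              rw [Set.singleton_inter_eq_empty]; exact hcon x hxsupp
            simp [this]
          · refine le_antisymm ?_ (zero_le)
            have hx0 : ν.1.toMeasure {x} = 0 := by
              simp only [suppSet, Set.mem_setOf_eq, not_not] at hxsupp
              rw [← MeasureTheory.ProbabilityMeasure.ennreal_coeFn_eq_coeFn_toMeasure,
                hxsupp]
              simp
            calc ν.1.toMeasure ({x} ∩ G) ≤ ν.1.toMeasure {x} :=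
                  MeasureTheory.measure_mono Set.inter_subset_left
              _ = 0 := hx0
  have := MeasureTheory.ProbabilityMeasure.ennreal_coeFn_eq_coeFn_toMeasure ν.1 G
  rw [hzero] at this
  exact_mod_cast this

lemma suppSet_nonempty (ν : Pfin S1) : (suppSet ν.1).Nonempty := by
  obtain ⟨x, hx, _⟩ := exists_atom_of_ne_zero ν MeasurableSet.univ
    (by simp : ν.1 Set.univ ≠ 0)
  exact ⟨x, hx⟩

lemma suppSet_finite (ν : Pfin S1) : (suppSet ν.1).Finite := by
  obtain ⟨S, hS⟩ := ν.2
  apply S.finite_toSet.subset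
  intro x hx
  by_contra hxS
  apply hx
  have hSm : MeasurableSet (↑S : Set S1) := S.finite_toSet.measurableSet
  have hS1 : ν.1.toMeasure (↑S : Set S1) = 1 := by
    rw [← MeasureTheory.ProbabilityMeasure.ennreal_coeFn_eq_coeFn_toMeasure, hS]; simp
  have hScompl : ν.1.toMeasure (↑S : Set S1)ᶜ = 0 := by
    rw [MeasureTheory.measure_compl hSm (by simp [hS1]), hS1]
    simp [MeasureTheory.measure_univ]
  have h0 : ν.1.toMeasure {x} = 0 := by
    refine le_antisymm ?_ (zero_le)
    calc ν.1.toMeasure {x} ≤ ν.1.toMeasure (↑S : Set S1)ᶜ :=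
          MeasureTheory.measure_mono (by simpa using hxS)
      _ = 0 := hScompl
  have := MeasureTheory.ProbabilityMeasure.ennreal_coeFn_eq_coeFn_toMeasure ν.1 {x}
  rw [h0] at this
  exact_mod_cast this

lemma pm_ne_zero_iff (ρ : MeasureTheory.ProbabilityMeasure S1) (s : Set S1) :
    ρ s ≠ 0 ↔ (ρ : MeasureTheory.Measure S1) s ≠ 0 := by
  rw [← MeasureTheory.ProbabilityMeasure.ennreal_coeFn_eq_coeFn_toMeasure]
  simp

/-- Weak lower semicontinuity of measures of open sets, in `eventually` form. -/
lemma eventually_meas_ne_zero {μ : MeasureTheory.ProbabilityMeasure S1} {G : Set S1}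
    (hG : IsOpen G) (h : μ G ≠ 0) :
    ∀ᶠ ν : MeasureTheory.ProbabilityMeasure S1 in nhds μ, ν G ≠ 0 := by
  have hlim := MeasureTheory.ProbabilityMeasure.le_liminf_measure_open_of_tendsto
    (μ := μ) (μs := id) tendsto_id hG
  have h0 : (0 : ENNReal) <
      liminf (fun i : MeasureTheory.ProbabilityMeasure S1 =>
        ((id i : MeasureTheory.ProbabilityMeasure S1) : MeasureTheory.Measure S1) G)
        (nhds μ) := by
    refine lt_of_lt_of_le ?_ hlim
    exact pos_iff_ne_zero.mpr ((pm_ne_zero_iff μ G).mp h)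
  have hev := Filter.eventually_lt_of_lt_liminf h0
  exact hev.mono fun ν hν => (pm_ne_zero_iff ν G).mpr hν.ne'

/-- Near `μ`, every measure has an atom near each atom of `μ`. -/
lemma eventually_atom_near (μ : Pfin S1) {θ : S1} (hθ : θ ∈ suppSet μ.1)
    {ε : ℝ} (hε : 0 < ε) :
    ∀ᶠ ν : Pfin S1 in nhds μ, ∃ x ∈ suppSet ν.1, dist θ x < ε := by
  have hμG : μ.1 (Metric.ball θ ε) ≠ 0 := by
    intro h0
    apply hθ
    refine le_antisymm ?_ (zero_le)
    rw [← h0]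
    exact MeasureTheory.ProbabilityMeasure.apply_mono μ.1
      (Set.singleton_subset_iff.mpr (Metric.mem_ball_self hε))
  have h1 := eventually_meas_ne_zero Metric.isOpen_ball hμG
  have h2 : ∀ᶠ ν : Pfin S1 in nhds μ, ν.1 (Metric.ball θ ε) ≠ 0 :=
    (continuous_subtype_val.tendsto μ).eventually h1
  refine h2.mono fun ν hν => ?_
  obtain ⟨x, hxsupp, hxball⟩ := exists_atom_of_ne_zero ν Metric.isOpen_ball.measurableSet hν
  exact ⟨x, hxsupp, by rwa [dist_comm, ← Metric.mem_ball]⟩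

end MeasureLemmas

/-- Let `r ∈ [0,π)`, `k ≥ 0`, and `μ ∈ V_{2k+1}(r)`. Every measure `ν`
in a sufficiently small neighborhood of `μ` in `VRm(S¹;r)` has at least `2k+1` arcs
(equivalently, such a neighborhood is disjoint from `W_{2k−1}(r)`). -/
theorem arcs_lower_semicontinuous (r : ℝ) (hr0 : 0 ≤ r) (hrπ : r < Real.pi) (k : ℕ)
    (μ : Pfin S1) (hμ : μ ∈ V r k) :
    ∀ᶠ ν in nhdsWithin μ (VRm r), 2 * k + 1 ≤ arcsCountM r ν := by
  classical
  obtain ⟨hVR, hcount⟩ := hμ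
  have hΘfin : (suppSet μ.1).Finite := suppSet_finite μ
  have hΘne : (suppSet μ.1).Nonempty := suppSet_nonempty μ
  set Θ := suppSet μ.1 with hΘdef
  have hd : ∀ x ∈ Θ, ∀ y ∈ Θ, dist x y ≤ r := fun x hx y hy =>
    (Metric.dist_le_diam_of_mem hΘfin.isBounded hx hy).trans hVR
  obtain ⟨q, hq⟩ := hΘne
  obtain ⟨c, rfl⟩ := QuotientAddGroup.mk_surjective q
  set 𝒜 := {A : Set S1 | IsArc r Θ A} with h𝒜def
  have hcard : 𝒜.ncard = 2 * k + 1 := hcount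
  have h𝒜fin : 𝒜.Finite := arcs_finite hr0 hrπ hq hd hΘfin
  have h𝒜ne : 𝒜.Nonempty := Set.nonempty_of_ncard_ne_zero (by rw [hcard]; omega)
  -- choose a base parameter for each arc
  have hrep : ∀ A : Set S1, ∃ t : ℝ, A ∈ 𝒜 → t ∈ liftSet r Θ c ∧ A = arcOf r Θ c t := by
    intro A
    by_cases hA : A ∈ 𝒜
    · obtain ⟨t, ht, hA'⟩ := arcs_sub_image hr0 hrπ hq hd hA
      exact ⟨t, fun _ => ⟨ht, hA'.symm⟩⟩
    · exact ⟨0, fun h => absurd h hA⟩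
  choose ψ hψ using hrep
  -- choose an excluded point between any two distinct arcs
  have hgap : ∀ A B : Set S1, ∃ u : ℝ, ∃ θ : S1,
      A ∈ 𝒜 → B ∈ 𝒜 → A ≠ B → ψ A < ψ B →
      (ψ A < u ∧ u < ψ B) ∧ θ ∈ Θ ∧ r < dist θ ((u : ℝ) : S1) := by
    intro A B
    by_cases h : A ∈ 𝒜 ∧ B ∈ 𝒜 ∧ A ≠ B ∧ ψ A < ψ B
    · obtain ⟨hA, hB, hne, hlt⟩ := h
      have h1 : arcOf r Θ c (ψ A) ≠ arcOf r Θ c (ψ B) := by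
        rw [← (hψ A hA).2, ← (hψ B hB).2]; exact hne
      obtain ⟨u, hu, θ, hθ, hθd⟩ := gap_exists (liftSet_sub_okSet hd (hψ A hA).1)
        (liftSet_sub_okSet hd (hψ B hB).1) hlt.le h1
      exact ⟨u, θ, fun _ _ _ _ => ⟨hu, hθ, hθd⟩⟩
    · exact ⟨0, ((0 : ℝ) : S1), fun h1 h2 h3 h4 => absurd ⟨h1, h2, h3, h4⟩ h⟩
  choose gp θp hgp using hgap
  -- the modulus ε
  set G : Set S1 × Set S1 → ℝ := fun z =>
    if h : z.1 ∈ 𝒜 ∧ z.2 ∈ 𝒜 ∧ z.1 ≠ z.2 ∧ ψ z.1 < ψ z.2 then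
      min (min (gp z.1 z.2 - ψ z.1) (ψ z.2 - gp z.1 z.2))
        ((dist (θp z.1 z.2) ((gp z.1 z.2 : ℝ) : S1) - r) / 2)
    else (Real.pi - r) / 2 with hGdef
  have hGpos : ∀ z, 0 < G z := by
    intro z
    simp only [hGdef]
    by_cases h : z.1 ∈ 𝒜 ∧ z.2 ∈ 𝒜 ∧ z.1 ≠ z.2 ∧ ψ z.1 < ψ z.2
    · rw [dif_pos h]
      obtain ⟨h1, h2, h3, h4⟩ := h
      have hu := (hgp z.1 z.2 h1 h2 h3 h4).1
      have hθd := (hgp z.1 z.2 h1 h2 h3 h4).2.2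
      exact lt_min (lt_min (by linarith [hu.1]) (by linarith [hu.2])) (by linarith)
    · rw [dif_neg h]; linarith
  set T : Finset (Set S1 × Set S1) := (h𝒜fin.prod h𝒜fin).toFinset with hTdef
  have hTne : T.Nonempty := (Set.Finite.toFinset_nonempty _).mpr (h𝒜ne.prod h𝒜ne)
  set ε : ℝ := min ((Real.pi - r) / 2) (T.inf' hTne G) with hεdef
  have hεpos : 0 < ε :=
    lt_min (by linarith) ((Finset.lt_inf'_iff hTne).mpr fun z _ => hGpos z)
  have hεπ : ε ≤ (Real.pi - r) / 2 := min_le_left _ _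
  have hεle : ∀ A ∈ 𝒜, ∀ B ∈ 𝒜, ε ≤ G (A, B) := fun A hA B hB =>
    (min_le_right _ _).trans (Finset.inf'_le G (by
      rw [hTdef, Set.Finite.mem_toFinset]; exact Set.mk_mem_prod hA hB))
  -- the neighborhood
  have hev1 : ∀ᶠ ν : Pfin S1 in nhds μ, ∀ θ ∈ Θ, ∃ x ∈ suppSet ν.1, dist θ x < ε :=
    hΘfin.eventually_all.mpr fun θ hθ => eventually_atom_near μ hθ hεpos
  filter_upwards [hev1.filter_mono nhdsWithin_le_nhds, self_mem_nhdsWithin] with ν hν hνVR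
  -- facts about the support of ν
  have hΘ'fin : (suppSet ν.1).Finite := suppSet_finite ν
  have hd' : ∀ x ∈ suppSet ν.1, ∀ y ∈ suppSet ν.1, dist x y ≤ r := fun x hx y hy =>
    (Metric.dist_le_diam_of_mem hΘ'fin.isBounded hx hy).trans hνVR
  obtain ⟨x₀, hx₀supp, hx₀d⟩ := hν _ hq
  obtain ⟨c', hc'coe, hc'd, _⟩ := S1.exists_lift c x₀
  have hc' : ((c' : ℝ) : S1) ∈ suppSet ν.1 := hc'coe ▸ hx₀supp
  have hcc' : |c' - c| < ε := by rw [hc'd]; exact hx₀d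
  -- nearby atoms for each arc representative
  have hspex : ∀ A ∈ 𝒜, ∃ s : ℝ, ((s : ℝ) : S1) ∈ suppSet ν.1 ∧ |s - ψ A| < ε := by
    intro A hA
    obtain ⟨x, hxsupp, hxd⟩ := hν _ (hψ A hA).1.2
    obtain ⟨s, hs, hsd, _⟩ := S1.exists_lift (ψ A) x
    exact ⟨s, hs ▸ hxsupp, by rw [hsd]; exact hxd⟩
  choose! sp hsp1 hsp2 using hspex
  have hspok : ∀ A ∈ 𝒜, sp A ∈ okSet r (suppSet ν.1) c' := by
    intro A hA
    have hψw := (hψ A hA).1.1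
    have e1 := abs_lt.mp (hsp2 A hA)
    have e3 := abs_lt.mp hcc'
    have hπ : |sp A - c'| ≤ Real.pi := by
      rw [abs_le]
      constructor <;> [nlinarith [hψw.1, hψw.2]; nlinarith [hψw.1, hψw.2]]
    have h2 : dist ((c' : ℝ) : S1) ((sp A : ℝ) : S1) ≤ r := hd' _ hc' _ (hsp1 A hA)
    have h3 : |sp A - c'| ≤ r := by
      rw [abs_sub_comm, ← S1.dist_coe_eq (by rwa [abs_sub_comm])]
      exact h2
    have h3' := abs_le.mp h3
    exact ⟨⟨by linarith [h3'.1], by linarith [h3'.2]⟩,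
      fun x hx => hd' x hx _ (hsp1 A hA)⟩
  -- distinct arcs of μ give distinct arcs of ν
  have key : ∀ A ∈ 𝒜, ∀ B ∈ 𝒜, A ≠ B → ψ A < ψ B →
      arcOf r (suppSet ν.1) c' (sp A) ≠ arcOf r (suppSet ν.1) c' (sp B) := by
    intro A hA B hB hne hlt Heq
    have hG := hεle A hA B hB
    simp only [hGdef] at hG
    rw [dif_pos (⟨hA, hB, hne, hlt⟩ :
      (A, B).1 ∈ 𝒜 ∧ (A, B).2 ∈ 𝒜 ∧ (A, B).1 ≠ (A, B).2 ∧ ψ (A, B).1 < ψ (A, B).2)] at hG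
    have hε1 : ε ≤ gp A B - ψ A := hG.trans ((min_le_left _ _).trans (min_le_left _ _))
    have hε2 : ε ≤ ψ B - gp A B := hG.trans ((min_le_left _ _).trans (min_le_right _ _))
    have hε3 : ε ≤ (dist (θp A B) ((gp A B : ℝ) : S1) - r) / 2 := hG.trans (min_le_right _ _)
    have hspA := abs_lt.mp (hsp2 A hA)
    have hspB := abs_lt.mp (hsp2 B hB)
    have hspAltu : sp A < gp A B := by linarith
    have huspB : gp A B < sp B := by linarith
    have hokA := hspok A hA
    have hokB := hspok B hB
    have hspBmem : sp B ∈ Set.Icc (leftEnd r (suppSet ν.1) c' (sp A))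
        (rightEnd r (suppSet ν.1) c' (sp A)) := by
      have h1 : ((sp B : ℝ) : S1) ∈ arcOf r (suppSet ν.1) c' (sp A) :=
        Heq ▸ mem_arcOf_self hokB
      exact (S1.mem_image_iff hrπ (arcOf_interval_window hokA) hokB.1).mp h1
    have humem : gp A B ∈ Set.Icc (leftEnd r (suppSet ν.1) c' (sp A))
        (rightEnd r (suppSet ν.1) c' (sp A)) :=
      ⟨(leftEnd_spec hokA).1.2.trans hspAltu.le, huspB.le.trans hspBmem.2⟩
    have huok := arcOf_interval_sub hokA humem
    obtain ⟨y, hysupp, hyd⟩ := hν _ (hgp A B hA hB hne hlt).2.1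
    have h1 : dist y ((gp A B : ℝ) : S1) ≤ r := huok.2 y hysupp
    have h2 := dist_triangle (θp A B) y ((gp A B : ℝ) : S1)
    linarith
  -- injectivity and counting
  have hinj : Set.InjOn (fun A => arcOf r (suppSet ν.1) c' (sp A)) 𝒜 := by
    intro A hA B hB hEq
    by_contra hne
    rcases lt_trichotomy (ψ A) (ψ B) with h | h | h
    · exact key A hA B hB hne h hEq
    · exact hne (by rw [(hψ A hA).2, (hψ B hB).2, h])
    · exact key B hB A hA (Ne.symm hne) h hEq.symm
  have hmaps : (fun A => arcOf r (suppSet ν.1) c' (sp A)) '' 𝒜 ⊆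
      {A : Set S1 | IsArc r (suppSet ν.1) A} := by
    rintro _ ⟨A, hA, rfl⟩
    exact isArc_arcOf hr0 hrπ hc' (hspok A hA) (hsp1 A hA)
  have harcs'fin : {A : Set S1 | IsArc r (suppSet ν.1) A}.Finite :=
    arcs_finite hr0 hrπ hc' hd' hΘ'fin
  calc 2 * k + 1 = 𝒜.ncard := hcard.symm
    _ = ((fun A => arcOf r (suppSet ν.1) c' (sp A)) '' 𝒜).ncard :=
        (Set.ncard_image_of_injOn hinj).symm
    _ ≤ {A : Set S1 | IsArc r (suppSet ν.1) A}.ncard := Set.ncard_le_ncard hmaps harcs'fin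
    _ = arcsCountM r ν := rfl
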